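/- Let X be a real Hausdorff topological vector space, D ⊆ X a convex set, n ≥ 1, and F₁,…,Fₙ : D × D → ℝ functions satisfying property (F), with E_{Fᵢ}(u,v) := −(Fᵢ)'_u(v). Then for every x ∈ Dⁿ and every y ∈ conv{x₁,…,xₙ}, the inequalities (E_{F₁}(x₁,y) + ⋯ + E_{Fₙ}(xₙ,y))(xᵢ − y) ≤ 0 for all i ∈ {1,…,n} hold if and only if y minimizes the function 𝔽(v) := F₁(x₁,v) + ⋯ + Fₙ(xₙ,v) over conv{x₁,…,xₙ}; moreover, there is at most one such y (by strict convexity of 𝔽). -/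

import Mathlib

open Filter Topology

private lemma strictConvexOn_finset_sum {X : Type*} [AddCommGroup X] [Module ℝ X]
    {s : Set X} {ι : Type*} (t : Finset ι) (ht : t.Nonempty) (f : ι → X → ℝ)
    (hf : ∀ i ∈ t, StrictConvexOn ℝ s (f i)) :
    StrictConvexOn ℝ s (fun v => ∑ i ∈ t, f i v) := by
  induction ht using Finset.Nonempty.cons_induction with
  | singleton i => simpa using hf i (by simp)
  | cons i t hit htne ih =>
    simp only [Finset.sum_cons]
    exact (hf i (by simp)).add_convexOn
      ((ih (fun j hj => hf j (Finset.mem_cons_of_mem hj))).convexOn)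

/-- For `F₁,…,Fₙ` with property (F) and `E_{Fᵢ}(u,v) := −(Fᵢ)'_u(v)`, a point
`y ∈ conv{x₁,…,xₙ}` satisfies the generalized deviation mean inequalities iff it minimizes
`v ↦ F₁(x₁,v) + ⋯ + Fₙ(xₙ,v)` over `conv{x₁,…,xₙ}`; moreover such a point is unique. -/
theorem generalized_deviation_mean_as_minimizer
    {X : Type*} [AddCommGroup X] [Module ℝ X] [TopologicalSpace X]
    [IsTopologicalAddGroup X] [ContinuousSMul ℝ X] [T2Space X]
    (D : Set X) (hDconv : Convex ℝ D)
    (n : ℕ) (hn : 0 < n)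
    (F : Fin n → X → X → ℝ) (F' : Fin n → X → X → X →L[ℝ] ℝ)
    (hFconv : ∀ i, ∀ u ∈ D, StrictConvexOn ℝ D (F i u))
    (hFgateaux : ∀ i, ∀ u ∈ D, ∀ v ∈ D, ∀ w ∈ D,
      Tendsto (fun t : ℝ => (F i u (v + t • (w - v)) - F i u v) / t) (𝓝[>] 0)
        (𝓝 (F' i u v (w - v))))
    (hF'0 : ∀ i, ∀ u ∈ D, F' i u u = 0)
    (x : Fin n → X) (hx : ∀ i, x i ∈ D) :
    (∀ y ∈ convexHull ℝ (Set.range x),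
      ((∀ i, (∑ j, -F' j (x j) y) (x i - y) ≤ 0) ↔
        ∀ v ∈ convexHull ℝ (Set.range x), ∑ j, F j (x j) y ≤ ∑ j, F j (x j) v)) ∧
    (∀ y₁ ∈ convexHull ℝ (Set.range x), ∀ y₂ ∈ convexHull ℝ (Set.range x),
      (∀ i, (∑ j, -F' j (x j) y₁) (x i - y₁) ≤ 0) →
      (∀ i, (∑ j, -F' j (x j) y₂) (x i - y₂) ≤ 0) → y₁ = y₂) := by
  set C : Set X := convexHull ℝ (Set.range x) with hC
  have hCD : C ⊆ D := convexHull_min (Set.range_subset_iff.mpr hx) hDconv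
  have hCconv : Convex ℝ C := convex_convexHull ℝ _
  have hxC : ∀ i, x i ∈ C := fun i => subset_convexHull ℝ _ ⟨i, rfl⟩
  set G : X → ℝ := fun v => ∑ j, F j (x j) v with hG
  have hGconv : StrictConvexOn ℝ D G :=
    strictConvexOn_finset_sum _ (Finset.univ_nonempty_iff.mpr
      ⟨⟨0, hn⟩⟩) _ (fun j _ => hFconv j (x j) (hx j))
  -- Gateaux differentiability of G
  have hGt : ∀ v ∈ D, ∀ w ∈ D,
      Tendsto (fun t : ℝ => (G (v + t • (w - v)) - G v) / t) (𝓝[>] 0)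
        (𝓝 ((∑ j, F' j (x j) v) (w - v))) := by
    intro v hv w hw
    have := tendsto_finset_sum (Finset.univ : Finset (Fin n))
      (fun j _ => hFgateaux j (x j) (hx j) v hv w hw)
    simp only [ContinuousLinearMap.sum_apply]
    convert this using 2 with t
    rw [← Finset.sum_sub_distrib, Finset.sum_div]
  -- key: if y minimizes nothing assumed and v ∈ D, then slope bound
  have hslope : ∀ y ∈ D, ∀ v ∈ D, (∑ j, F' j (x j) y) (v - y) ≤ G v - G y := by
    intro y hy v hv
    refine le_of_tendsto (hGt y hy v hv) ?_
    filter_upwards [Ioc_mem_nhdsGT (zero_lt_one : (0:ℝ) < 1)] with t ht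
    have hconv := hGconv.convexOn.2 hy hv (by linarith [ht.1, ht.2] : (0:ℝ) ≤ 1 - t)
      (le_of_lt ht.1) (by ring)
    have hpt : (1 - t) • y + t • v = y + t • (v - y) := by
      rw [smul_sub, sub_smul, one_smul]; abel
    rw [hpt] at hconv
    simp only [smul_eq_mul] at hconv
    rw [div_le_iff₀ ht.1]
    nlinarith [hconv]
  -- the iff
  have main : ∀ y ∈ C, ((∀ i, (∑ j, -F' j (x j) y) (x i - y) ≤ 0) ↔
      ∀ v ∈ C, G y ≤ G v) := by
    intro y hyC
    have hyD := hCD hyC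
    have hneg : ∀ z : X, (∑ j, -F' j (x j) y) z = -((∑ j, F' j (x j) y) z) := by
      intro z; simp [ContinuousLinearMap.sum_apply]
    constructor
    · intro h v hvC
      -- 0 ≤ L (v - y) for all v ∈ C
      have hL : ∀ w ∈ C, (∑ j, F' j (x j) y) y ≤ (∑ j, F' j (x j) y) w := by
        have hs : C ⊆ {z | (∑ j, F' j (x j) y) y ≤ (∑ j, F' j (x j) y) z} := by
          refine convexHull_min ?_ (convex_halfSpace_ge
            ((∑ j, F' j (x j) y).toLinearMap.isLinear) _)
          rintro _ ⟨i, rfl⟩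
          have h2 := h i
          rw [hneg, neg_nonpos, map_sub] at h2
          simpa using sub_nonneg.mp (le_trans (le_refl _) h2)
        exact fun w hw => hs hw
      have h0 : 0 ≤ (∑ j, F' j (x j) y) (v - y) := by
        rw [map_sub]; linarith [hL v hvC]
      linarith [hslope y hyD v (hCD hvC)]
    · intro h i
      rw [hneg, neg_nonpos]
      refine ge_of_tendsto (hGt y hyD (x i) (hx i)) ?_
      filter_upwards [Ioc_mem_nhdsGT (zero_lt_one : (0:ℝ) < 1)] with t ht
      have hpt : y + t • (x i - y) = (1 - t) • y + t • x i := by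
        rw [smul_sub, sub_smul, one_smul]; abel
      have hmem : y + t • (x i - y) ∈ C := by
        rw [hpt]
        exact hCconv hyC (hxC i) (by linarith [ht.1, ht.2]) (le_of_lt ht.1) (by ring)
      have hle := h _ hmem
      exact div_nonneg (by linarith) (le_of_lt ht.1)
  refine ⟨main, ?_⟩
  intro y₁ hy₁ y₂ hy₂ h1 h2
  by_contra hne
  have m1 := (main y₁ hy₁).mp h1
  have m2 := (main y₂ hy₂).mp h2
  have hmid : (1/2 : ℝ) • y₁ + (1/2 : ℝ) • y₂ ∈ C :=
    hCconv hy₁ hy₂ (by norm_num) (by norm_num) (by norm_num)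
  have hstrict := hGconv.2 (hCD hy₁) (hCD hy₂) hne (by norm_num : (0:ℝ) < 1/2)
    (by norm_num : (0:ℝ) < 1/2) (by norm_num)
  have hle1 := m1 _ hmid
  have hle2 := m2 _ hmid
  have heq : G y₁ = G y₂ := le_antisymm (m1 y₂ hy₂) (m2 y₁ hy₁)
  rw [heq] at hle1 hstrict
  simp only [smul_eq_mul] at hstrict
  linarith
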